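/- The linear form s : A → k defined on the basis {i, j, α, β, βα, γ, γ², δ, δ²} by s(βα) = 1, s(δ²) = 1 (equivalently s(αβ) = s(βα) = 1 noting αβ = δ²), and s = 0 on all other basis elements, is a symmetrising form on A: s(ab) = s(ba) for all a,b ∈ A, and the kernel of s contains no nonzero left ideal of A. -/

import Mathlib

/-! The 9-dimensional algebra `A` given by the quiver with vertices `i, j`, arrows
`α : i → j`, `β : j → i`, and loops `γ, δ` at `i`, with relations
`δ² = γ³ = αβ`, `δγ = γδ = 0`, `δα = γα = 0`, `βδ = βγ = 0`.
Paths compose left-to-right, so the product `x * y` means "first `x`, then `y`";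
in particular `α * β` is a loop at `i` and `β * α` is a loop at `j`.
We realise `A` as the quotient of the free algebra on the six generators
`e_i, e_j, α, β, γ, δ` by the path-algebra relations together with the quiver relations. -/

open FreeAlgebra

/-- The defining relations of the quiver algebra: generator `0` is the vertex idempotent
`e_i`, `1` is `e_j`, `2` is `α : i → j`, `3` is `β : j → i`, `4` is the loop `γ` at `i`,
and `5` is the loop `δ` at `i`. -/
inductive QuiverRel (k : Type*) [Field k] :
    FreeAlgebra k (Fin 6) → FreeAlgebra k (Fin 6) → Prop
  | idem_i : QuiverRel k (ι k 0 * ι k 0) (ι k 0)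
  | idem_j : QuiverRel k (ι k 1 * ι k 1) (ι k 1)
  | orth_ij : QuiverRel k (ι k 0 * ι k 1) 0
  | orth_ji : QuiverRel k (ι k 1 * ι k 0) 0
  | sum_idem : QuiverRel k (ι k 0 + ι k 1) 1
  | alpha_src : QuiverRel k (ι k 0 * ι k 2) (ι k 2)   -- α starts at i
  | alpha_tgt : QuiverRel k (ι k 2 * ι k 1) (ι k 2)   -- α ends at j
  | beta_src : QuiverRel k (ι k 1 * ι k 3) (ι k 3)    -- β starts at j
  | beta_tgt : QuiverRel k (ι k 3 * ι k 0) (ι k 3)    -- β ends at i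
  | gamma_src : QuiverRel k (ι k 0 * ι k 4) (ι k 4)
  | gamma_tgt : QuiverRel k (ι k 4 * ι k 0) (ι k 4)
  | delta_src : QuiverRel k (ι k 0 * ι k 5) (ι k 5)
  | delta_tgt : QuiverRel k (ι k 5 * ι k 0) (ι k 5)
  | delta_sq : QuiverRel k (ι k 5 * ι k 5) (ι k 2 * ι k 3)        -- δ² = αβ
  | gamma_cube : QuiverRel k (ι k 4 * (ι k 4 * ι k 4)) (ι k 2 * ι k 3)  -- γ³ = αβ
  | delta_gamma : QuiverRel k (ι k 5 * ι k 4) 0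
  | gamma_delta : QuiverRel k (ι k 4 * ι k 5) 0
  | delta_alpha : QuiverRel k (ι k 5 * ι k 2) 0
  | gamma_alpha : QuiverRel k (ι k 4 * ι k 2) 0
  | beta_delta : QuiverRel k (ι k 3 * ι k 5) 0
  | beta_gamma : QuiverRel k (ι k 3 * ι k 4) 0

variable (k : Type*) [Field k]

/-- The 9-dimensional quiver algebra `A`. -/
abbrev QuiverAlg := RingQuot (QuiverRel k)

/-- The vertex idempotent `i`. -/
noncomputable def qi : QuiverAlg k := RingQuot.mkAlgHom k (QuiverRel k) (ι k 0)
/-- The vertex idempotent `j`. -/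
noncomputable def qj : QuiverAlg k := RingQuot.mkAlgHom k (QuiverRel k) (ι k 1)
/-- The arrow `α : i → j`. -/
noncomputable def qα : QuiverAlg k := RingQuot.mkAlgHom k (QuiverRel k) (ι k 2)
/-- The arrow `β : j → i`. -/
noncomputable def qβ : QuiverAlg k := RingQuot.mkAlgHom k (QuiverRel k) (ι k 3)
/-- The loop `γ` at `i`. -/
noncomputable def qγ : QuiverAlg k := RingQuot.mkAlgHom k (QuiverRel k) (ι k 4)
/-- The loop `δ` at `i`. -/
noncomputable def qδ : QuiverAlg k := RingQuot.mkAlgHom k (QuiverRel k) (ι k 5)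

/-- The standard basis vector `{i, j, α, β, βα, γ, γ², δ, δ²}` of `A`. -/
noncomputable def qbasisVec : Fin 9 → QuiverAlg k :=
  ![qi k, qj k, qα k, qβ k, qβ k * qα k, qγ k, qγ k ^ 2, qδ k, qδ k ^ 2]

/-- The values defining the symmetrising form `s` on the standard basis:
`s(βα) = s(δ²) (= s(αβ)) = 1` and `s = 0` on the other basis elements. -/
def symValues (s : QuiverAlg k →ₗ[k] k) : Prop :=
  s (qi k) = 0 ∧ s (qj k) = 0 ∧ s (qα k) = 0 ∧ s (qβ k) = 0 ∧
  s (qβ k * qα k) = 1 ∧ s (qγ k) = 0 ∧ s (qγ k ^ 2) = 0 ∧ s (qδ k) = 0 ∧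
  s (qδ k ^ 2) = 1


section Aux
variable {k}

lemma qrel {x y : FreeAlgebra k (Fin 6)} (h : QuiverRel k x y) :
    RingQuot.mkAlgHom k (QuiverRel k) x = RingQuot.mkAlgHom k (QuiverRel k) y :=
  RingQuot.mkAlgHom_rel k h

@[simp] lemma rii : qi k * qi k = qi k := by simp only [qi, qi]; rw [← map_mul]; exact qrel QuiverRel.idem_i
@[simp] lemma rjj : qj k * qj k = qj k := by simp only [qj, qj]; rw [← map_mul]; exact qrel QuiverRel.idem_j
@[simp] lemma rij : qi k * qj k = 0 := by simp only [qi, qj]; rw [← map_mul]; exact (qrel QuiverRel.orth_ij).trans (map_zero _)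
@[simp] lemma rji : qj k * qi k = 0 := by simp only [qj, qi]; rw [← map_mul]; exact (qrel QuiverRel.orth_ji).trans (map_zero _)
@[simp] lemma ria : qi k * qα k = qα k := by simp only [qi, qα]; rw [← map_mul]; exact qrel QuiverRel.alpha_src
@[simp] lemma raj : qα k * qj k = qα k := by simp only [qα, qj]; rw [← map_mul]; exact qrel QuiverRel.alpha_tgt
@[simp] lemma rjb : qj k * qβ k = qβ k := by simp only [qj, qβ]; rw [← map_mul]; exact qrel QuiverRel.beta_src
@[simp] lemma rbi : qβ k * qi k = qβ k := by simp only [qβ, qi]; rw [← map_mul]; exact qrel QuiverRel.beta_tgt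
@[simp] lemma rig : qi k * qγ k = qγ k := by simp only [qi, qγ]; rw [← map_mul]; exact qrel QuiverRel.gamma_src
@[simp] lemma rgi : qγ k * qi k = qγ k := by simp only [qγ, qi]; rw [← map_mul]; exact qrel QuiverRel.gamma_tgt
@[simp] lemma rid : qi k * qδ k = qδ k := by simp only [qi, qδ]; rw [← map_mul]; exact qrel QuiverRel.delta_src
@[simp] lemma rdi : qδ k * qi k = qδ k := by simp only [qδ, qi]; rw [← map_mul]; exact qrel QuiverRel.delta_tgt
@[simp] lemma rab : qα k * qβ k = qδ k * qδ k := by simp only [qα, qβ, qδ]; rw [← map_mul, ← map_mul]; exact (qrel QuiverRel.delta_sq).symm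
@[simp] lemma rdg : qδ k * qγ k = 0 := by simp only [qδ, qγ]; rw [← map_mul]; exact (qrel QuiverRel.delta_gamma).trans (map_zero _)
@[simp] lemma rgd : qγ k * qδ k = 0 := by simp only [qγ, qδ]; rw [← map_mul]; exact (qrel QuiverRel.gamma_delta).trans (map_zero _)
@[simp] lemma rda : qδ k * qα k = 0 := by simp only [qδ, qα]; rw [← map_mul]; exact (qrel QuiverRel.delta_alpha).trans (map_zero _)
@[simp] lemma rga : qγ k * qα k = 0 := by simp only [qγ, qα]; rw [← map_mul]; exact (qrel QuiverRel.gamma_alpha).trans (map_zero _)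
@[simp] lemma rbd : qβ k * qδ k = 0 := by simp only [qβ, qδ]; rw [← map_mul]; exact (qrel QuiverRel.beta_delta).trans (map_zero _)
@[simp] lemma rbg : qβ k * qγ k = 0 := by simp only [qβ, qγ]; rw [← map_mul]; exact (qrel QuiverRel.beta_gamma).trans (map_zero _)

@[simp] lemma rggg : qγ k * (qγ k * qγ k) = qδ k * qδ k := by
  simp only [qγ, qδ]; rw [← map_mul, ← map_mul, ← map_mul]
  exact (qrel QuiverRel.gamma_cube).trans (qrel QuiverRel.delta_sq).symm

lemma rsum : qi k + qj k = 1 := by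
  simp only [qi, qj]; rw [← map_add]; exact (qrel QuiverRel.sum_idem).trans (map_one _)

@[simp] lemma rja : qj k * qα k = 0 := by rw [← ria, ← mul_assoc, rji, zero_mul]
@[simp] lemma rai : qα k * qi k = 0 := by rw [← raj, mul_assoc, rji, mul_zero]
@[simp] lemma rib : qi k * qβ k = 0 := by rw [← rjb, ← mul_assoc, rij, zero_mul]
@[simp] lemma rbj : qβ k * qj k = 0 := by rw [← rbi, mul_assoc, rij, mul_zero]
@[simp] lemma rjg : qj k * qγ k = 0 := by rw [← rig, ← mul_assoc, rji, zero_mul]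
@[simp] lemma rgj : qγ k * qj k = 0 := by rw [← rgi, mul_assoc, rij, mul_zero]
@[simp] lemma rjd : qj k * qδ k = 0 := by rw [← rid, ← mul_assoc, rji, zero_mul]
@[simp] lemma rdj : qδ k * qj k = 0 := by rw [← rdi, mul_assoc, rij, mul_zero]
@[simp] lemma raa : qα k * qα k = 0 := by
  nth_rewrite 2 [← ria]; rw [← mul_assoc, rai, zero_mul]
@[simp] lemma rbb : qβ k * qβ k = 0 := by
  nth_rewrite 2 [← rjb]; rw [← mul_assoc, rbj, zero_mul]
@[simp] lemma rag : qα k * qγ k = 0 := by rw [← rig, ← mul_assoc, rai, zero_mul]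
@[simp] lemma rad : qα k * qδ k = 0 := by rw [← rid, ← mul_assoc, rai, zero_mul]
@[simp] lemma rgb : qγ k * qβ k = 0 := by rw [← rjb, ← mul_assoc, rgj, zero_mul]
@[simp] lemma rdb : qδ k * qβ k = 0 := by rw [← rjb, ← mul_assoc, rdj, zero_mul]
@[simp] lemma rddd : qδ k * (qδ k * qδ k) = 0 := by
  rw [← rab, ← mul_assoc, rda, zero_mul]

@[simp] lemma grii (x : QuiverAlg k) : qi k * (qi k * x) = qi k * x := by rw [← mul_assoc, rii]
@[simp] lemma grij (x : QuiverAlg k) : qi k * (qj k * x) = 0 := by rw [← mul_assoc, rij, zero_mul]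
@[simp] lemma gria (x : QuiverAlg k) : qi k * (qα k * x) = qα k * x := by rw [← mul_assoc, ria]
@[simp] lemma grib (x : QuiverAlg k) : qi k * (qβ k * x) = 0 := by rw [← mul_assoc, rib, zero_mul]
@[simp] lemma grig (x : QuiverAlg k) : qi k * (qγ k * x) = qγ k * x := by rw [← mul_assoc, rig]
@[simp] lemma grid (x : QuiverAlg k) : qi k * (qδ k * x) = qδ k * x := by rw [← mul_assoc, rid]
@[simp] lemma grji (x : QuiverAlg k) : qj k * (qi k * x) = 0 := by rw [← mul_assoc, rji, zero_mul]
@[simp] lemma grjj (x : QuiverAlg k) : qj k * (qj k * x) = qj k * x := by rw [← mul_assoc, rjj]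
@[simp] lemma grja (x : QuiverAlg k) : qj k * (qα k * x) = 0 := by rw [← mul_assoc, rja, zero_mul]
@[simp] lemma grjb (x : QuiverAlg k) : qj k * (qβ k * x) = qβ k * x := by rw [← mul_assoc, rjb]
@[simp] lemma grjg (x : QuiverAlg k) : qj k * (qγ k * x) = 0 := by rw [← mul_assoc, rjg, zero_mul]
@[simp] lemma grjd (x : QuiverAlg k) : qj k * (qδ k * x) = 0 := by rw [← mul_assoc, rjd, zero_mul]
@[simp] lemma grai (x : QuiverAlg k) : qα k * (qi k * x) = 0 := by rw [← mul_assoc, rai, zero_mul]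
@[simp] lemma graj (x : QuiverAlg k) : qα k * (qj k * x) = qα k * x := by rw [← mul_assoc, raj]
@[simp] lemma graa (x : QuiverAlg k) : qα k * (qα k * x) = 0 := by rw [← mul_assoc, raa, zero_mul]
@[simp] lemma grab (x : QuiverAlg k) : qα k * (qβ k * x) = qδ k * (qδ k * x) := by rw [← mul_assoc, rab, mul_assoc]
@[simp] lemma grag (x : QuiverAlg k) : qα k * (qγ k * x) = 0 := by rw [← mul_assoc, rag, zero_mul]
@[simp] lemma grad (x : QuiverAlg k) : qα k * (qδ k * x) = 0 := by rw [← mul_assoc, rad, zero_mul]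
@[simp] lemma grbi (x : QuiverAlg k) : qβ k * (qi k * x) = qβ k * x := by rw [← mul_assoc, rbi]
@[simp] lemma grbj (x : QuiverAlg k) : qβ k * (qj k * x) = 0 := by rw [← mul_assoc, rbj, zero_mul]
@[simp] lemma grbb (x : QuiverAlg k) : qβ k * (qβ k * x) = 0 := by rw [← mul_assoc, rbb, zero_mul]
@[simp] lemma grbg (x : QuiverAlg k) : qβ k * (qγ k * x) = 0 := by rw [← mul_assoc, rbg, zero_mul]
@[simp] lemma grbd (x : QuiverAlg k) : qβ k * (qδ k * x) = 0 := by rw [← mul_assoc, rbd, zero_mul]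
@[simp] lemma grgi (x : QuiverAlg k) : qγ k * (qi k * x) = qγ k * x := by rw [← mul_assoc, rgi]
@[simp] lemma grgj (x : QuiverAlg k) : qγ k * (qj k * x) = 0 := by rw [← mul_assoc, rgj, zero_mul]
@[simp] lemma grga (x : QuiverAlg k) : qγ k * (qα k * x) = 0 := by rw [← mul_assoc, rga, zero_mul]
@[simp] lemma grgb (x : QuiverAlg k) : qγ k * (qβ k * x) = 0 := by rw [← mul_assoc, rgb, zero_mul]
@[simp] lemma grgd (x : QuiverAlg k) : qγ k * (qδ k * x) = 0 := by rw [← mul_assoc, rgd, zero_mul]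
@[simp] lemma grdi (x : QuiverAlg k) : qδ k * (qi k * x) = qδ k * x := by rw [← mul_assoc, rdi]
@[simp] lemma grdj (x : QuiverAlg k) : qδ k * (qj k * x) = 0 := by rw [← mul_assoc, rdj, zero_mul]
@[simp] lemma grda (x : QuiverAlg k) : qδ k * (qα k * x) = 0 := by rw [← mul_assoc, rda, zero_mul]
@[simp] lemma grdb (x : QuiverAlg k) : qδ k * (qβ k * x) = 0 := by rw [← mul_assoc, rdb, zero_mul]
@[simp] lemma grdg (x : QuiverAlg k) : qδ k * (qγ k * x) = 0 := by rw [← mul_assoc, rdg, zero_mul]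

@[simp] lemma grggg (x : QuiverAlg k) : qγ k * (qγ k * (qγ k * x)) = qδ k * (qδ k * x) := by
  rw [show qγ k * (qγ k * (qγ k * x)) = (qγ k * (qγ k * qγ k)) * x from by
        simp only [mul_assoc], rggg, mul_assoc]
@[simp] lemma grddd (x : QuiverAlg k) : qδ k * (qδ k * (qδ k * x)) = 0 := by
  rw [show qδ k * (qδ k * (qδ k * x)) = (qδ k * (qδ k * qδ k)) * x from by
        simp only [mul_assoc], rddd, zero_mul]

@[simp] lemma qb0 : qbasisVec k 0 = qi k := rfl
@[simp] lemma qb1 : qbasisVec k 1 = qj k := rfl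
@[simp] lemma qb2 : qbasisVec k 2 = qα k := rfl
@[simp] lemma qb3 : qbasisVec k 3 = qβ k := rfl
@[simp] lemma qb4 : qbasisVec k 4 = qβ k * qα k := rfl
@[simp] lemma qb5 : qbasisVec k 5 = qγ k := rfl
@[simp] lemma qb6 : qbasisVec k 6 = qγ k ^ 2 := rfl
@[simp] lemma qb7 : qbasisVec k 7 = qδ k := rfl
@[simp] lemma qb8 : qbasisVec k 8 = qδ k ^ 2 := rfl

@[simp] lemma qbm0 : qbasisVec k ⟨0, by omega⟩ = qi k := rfl
@[simp] lemma qbm1 : qbasisVec k ⟨1, by omega⟩ = qj k := rfl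
@[simp] lemma qbm2 : qbasisVec k ⟨2, by omega⟩ = qα k := rfl
@[simp] lemma qbm3 : qbasisVec k ⟨3, by omega⟩ = qβ k := rfl
@[simp] lemma qbm4 : qbasisVec k ⟨4, by omega⟩ = qβ k * qα k := rfl
@[simp] lemma qbm5 : qbasisVec k ⟨5, by omega⟩ = qγ k := rfl
@[simp] lemma qbm6 : qbasisVec k ⟨6, by omega⟩ = qγ k ^ 2 := rfl
@[simp] lemma qbm7 : qbasisVec k ⟨7, by omega⟩ = qδ k := rfl
@[simp] lemma qbm8 : qbasisVec k ⟨8, by omega⟩ = qδ k ^ 2 := rfl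

/-! ### Spanning -/

local notation "M" => Submodule.span k (Set.range (qbasisVec k))

lemma memB (p : Fin 9) : qbasisVec k p ∈ M := Submodule.subset_span ⟨p, rfl⟩

lemma mem_qi : qi k ∈ M := by simpa using memB (k := k) 0
lemma mem_qj : qj k ∈ M := by simpa using memB (k := k) 1
lemma mem_qa : qα k ∈ M := by simpa using memB (k := k) 2
lemma mem_qb : qβ k ∈ M := by simpa using memB (k := k) 3
lemma mem_ba : qβ k * qα k ∈ M := by simpa using memB (k := k) 4
lemma mem_qg : qγ k ∈ M := by simpa using memB (k := k) 5
lemma mem_gg : qγ k * qγ k ∈ M := by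
  have := memB (k := k) 6; rwa [qb6, pow_two] at this
lemma mem_qd : qδ k ∈ M := by simpa using memB (k := k) 7
lemma mem_dd : qδ k * qδ k ∈ M := by
  have := memB (k := k) 8; rwa [qb8, pow_two] at this

lemma basis_mul_mem (p q : Fin 9) : qbasisVec k p * qbasisVec k q ∈ M := by
  fin_cases p <;> fin_cases q <;>
    simp only [Fin.isValue, qb0, qb1, qb2, qb3, qb4, qb5, qb6, qb7, qb8,
      qbm0, qbm1, qbm2, qbm3, qbm4, qbm5, qbm6, qbm7, qbm8, pow_two, mul_assoc,
      rii, rjj, rij, rji, ria, raj, rjb, rbi, rig, rgi, rid, rdi, rab, rdg, rgd, rda, rga,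
      rbd, rbg, rggg, rja, rai, rib, rbj, rjg, rgj, rjd, rdj, raa, rbb, rag, rad, rgb, rdb,
      rddd, grii, grjj, grij, grji, gria, graj, grjb, grbi, grig, grgi, grid, grdi, grab,
      grdg, grgd, grda, grga, grbd, grbg, grja, grai, grib, grbj, grjg, grgj, grjd, grdj,
      graa, grbb, grag, grad, grgb, grdb, grggg, grddd, mul_zero, zero_mul] <;>
    first
      | exact Submodule.zero_mem _
      | exact mem_qi
      | exact mem_qj
      | exact mem_qa
      | exact mem_qb
      | exact mem_ba
      | exact mem_qg
      | exact mem_gg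
      | exact mem_qd
      | exact mem_dd

lemma mul_mem_M {x y : QuiverAlg k} (hx : x ∈ M) (hy : y ∈ M) : x * y ∈ M := by
  have hle : M * M ≤ M := by
    rw [Submodule.span_mul_span]
    refine Submodule.span_le.2 ?_
    rintro z hz
    rw [Set.mem_mul] at hz
    obtain ⟨u, ⟨p, rfl⟩, v, ⟨q, rfl⟩, rfl⟩ := hz
    exact basis_mul_mem p q
  exact hle (Submodule.mul_mem_mul hx hy)

lemma hspan : Submodule.span k (Set.range (qbasisVec k)) = ⊤ := by
  rw [eq_top_iff]
  rintro x -
  obtain ⟨y, rfl⟩ := RingQuot.mkAlgHom_surjective k (QuiverRel k) x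
  induction y using FreeAlgebra.induction with
  | grade0 r =>
      rw [AlgHom.commutes, Algebra.algebraMap_eq_smul_one]
      refine Submodule.smul_mem _ _ ?_
      rw [← rsum (k := k)]
      exact Submodule.add_mem _ mem_qi mem_qj
  | grade1 n =>
      fin_cases n
      · exact mem_qi
      · exact mem_qj
      · exact mem_qa
      · exact mem_qb
      · exact mem_qg
      · exact mem_qd
  | mul a b ha hb => rw [map_mul]; exact mul_mem_M ha hb
  | add a b ha hb => rw [map_add]; exact Submodule.add_mem _ ha hb

/-! ### Symmetry -/

lemma table_sym (s : QuiverAlg k →ₗ[k] k) (hs : symValues k s) (p q : Fin 9) :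
    s (qbasisVec k p * qbasisVec k q) = s (qbasisVec k q * qbasisVec k p) := by
  obtain ⟨h0, h1, h2, h3, h4, h5, h6, h7, h8⟩ := hs
  have h6' : s (qγ k * qγ k) = 0 := by rwa [← pow_two]
  have h8' : s (qδ k * qδ k) = 1 := by rwa [← pow_two]
  fin_cases p <;> fin_cases q <;>
    simp only [Fin.isValue, qb0, qb1, qb2, qb3, qb4, qb5, qb6, qb7, qb8,
      qbm0, qbm1, qbm2, qbm3, qbm4, qbm5, qbm6, qbm7, qbm8, pow_two, mul_assoc,
      rii, rjj, rij, rji, ria, raj, rjb, rbi, rig, rgi, rid, rdi, rab, rdg, rgd, rda, rga,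
      rbd, rbg, rggg, rja, rai, rib, rbj, rjg, rgj, rjd, rdj, raa, rbb, rag, rad, rgb, rdb,
      rddd, grii, grjj, grij, grji, gria, graj, grjb, grbi, grig, grgi, grid, grdi, grab,
      grdg, grgd, grda, grga, grbd, grbg, grja, grai, grib, grbj, grjg, grgj, grjd, grdj,
      graa, grbb, grag, grad, grgb, grdb, grggg, grddd, mul_zero, zero_mul] <;>
    simp only [map_zero, h0, h1, h2, h3, h4, h5, h6', h7, h8']

lemma sym_all (s : QuiverAlg k →ₗ[k] k) (hs : symValues k s) (a b : QuiverAlg k) :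
    s (a * b) = s (b * a) := by
  have step2 : ∀ (q : Fin 9) (a : QuiverAlg k),
      s (a * qbasisVec k q) = s (qbasisVec k q * a) := by
    intro q
    have heq : s.comp (LinearMap.mulRight k (qbasisVec k q)) =
        s.comp (LinearMap.mulLeft k (qbasisVec k q)) := by
      refine LinearMap.ext_on_range (hspan (k := k)) fun p => ?_
      simpa using table_sym s hs p q
    intro a
    simpa using DFunLike.congr_fun heq a
  have heq : s.comp (LinearMap.mulLeft k a) = s.comp (LinearMap.mulRight k a) := by
    refine LinearMap.ext_on_range (hspan (k := k)) fun q => ?_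
    simpa using step2 q a
  simpa using DFunLike.congr_fun heq b

/-! ### The dual family and the ideal condition -/

noncomputable def dualVec : Fin 9 → QuiverAlg k :=
  ![qδ k ^ 2, qβ k * qα k, qβ k, qα k, qj k, qγ k ^ 2, qγ k, qδ k, qi k]

@[simp] lemma dv0 : dualVec (k := k) 0 = qδ k ^ 2 := rfl
@[simp] lemma dv1 : dualVec (k := k) 1 = qβ k * qα k := rfl
@[simp] lemma dv2 : dualVec (k := k) 2 = qβ k := rfl
@[simp] lemma dv3 : dualVec (k := k) 3 = qα k := rfl
@[simp] lemma dv4 : dualVec (k := k) 4 = qj k := rfl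
@[simp] lemma dv5 : dualVec (k := k) 5 = qγ k ^ 2 := rfl
@[simp] lemma dv6 : dualVec (k := k) 6 = qγ k := rfl
@[simp] lemma dv7 : dualVec (k := k) 7 = qδ k := rfl
@[simp] lemma dv8 : dualVec (k := k) 8 = qi k := rfl
@[simp] lemma dvm0 : dualVec (k := k) ⟨0, by omega⟩ = qδ k ^ 2 := rfl
@[simp] lemma dvm1 : dualVec (k := k) ⟨1, by omega⟩ = qβ k * qα k := rfl
@[simp] lemma dvm2 : dualVec (k := k) ⟨2, by omega⟩ = qβ k := rfl
@[simp] lemma dvm3 : dualVec (k := k) ⟨3, by omega⟩ = qα k := rfl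
@[simp] lemma dvm4 : dualVec (k := k) ⟨4, by omega⟩ = qj k := rfl
@[simp] lemma dvm5 : dualVec (k := k) ⟨5, by omega⟩ = qγ k ^ 2 := rfl
@[simp] lemma dvm6 : dualVec (k := k) ⟨6, by omega⟩ = qγ k := rfl
@[simp] lemma dvm7 : dualVec (k := k) ⟨7, by omega⟩ = qδ k := rfl
@[simp] lemma dvm8 : dualVec (k := k) ⟨8, by omega⟩ = qi k := rfl

lemma extract (s : QuiverAlg k →ₗ[k] k) (hs : symValues k s) (p q : Fin 9) :
    s (qbasisVec k p * dualVec (k := k) q) = if p = q then 1 else 0 := by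
  obtain ⟨h0, h1, h2, h3, h4, h5, h6, h7, h8⟩ := hs
  have h6' : s (qγ k * qγ k) = 0 := by rwa [← pow_two]
  have h8' : s (qδ k * qδ k) = 1 := by rwa [← pow_two]
  fin_cases p <;> fin_cases q <;>
    simp only [Fin.isValue, dv0, dv1, dv2, dv3, dv4, dv5, dv6, dv7, dv8,
      dvm0, dvm1, dvm2, dvm3, dvm4, dvm5, dvm6, dvm7, dvm8,
      qb0, qb1, qb2, qb3, qb4, qb5, qb6, qb7, qb8,
      qbm0, qbm1, qbm2, qbm3, qbm4, qbm5, qbm6, qbm7, qbm8, pow_two, mul_assoc,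
      rii, rjj, rij, rji, ria, raj, rjb, rbi, rig, rgi, rid, rdi, rab, rdg, rgd, rda, rga,
      rbd, rbg, rggg, rja, rai, rib, rbj, rjg, rgj, rjd, rdj, raa, rbb, rag, rad, rgb, rdb,
      rddd, grii, grjj, grij, grji, gria, graj, grjb, grbi, grig, grgi, grid, grdi, grab,
      grdg, grgd, grda, grga, grbd, grbg, grja, grai, grib, grbj, grjg, grgj, grjd, grdj,
      graa, grbb, grag, grad, grgb, grdb, grggg, grddd, mul_zero, zero_mul] <;>
    simp [map_zero, h0, h1, h2, h3, h4, h5, h6', h7, h8']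

lemma ideal_part (s : QuiverAlg k →ₗ[k] k) (hs : symValues k s)
    (I : Ideal (QuiverAlg k)) (hI : ∀ x ∈ I, s x = 0) : I = ⊥ := by
  rw [eq_bot_iff]
  intro x hx
  have hxs : x ∈ Submodule.span k (Set.range (qbasisVec k)) := by
    rw [hspan]; trivial
  obtain ⟨c, hc⟩ := (Submodule.mem_span_range_iff_exists_fun k).1 hxs
  have hc0 : ∀ q, c q = 0 := by
    intro q
    have h1 : s (x * dualVec (k := k) q) = c q := by
      rw [← hc, Finset.sum_mul]
      simp only [smul_mul_assoc, map_sum, map_smul, smul_eq_mul, extract s hs,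
        mul_ite, mul_one, mul_zero]
      simp
    have h2 : s (dualVec (k := k) q * x) = 0 := hI _ (I.mul_mem_left _ hx)
    rw [← h1, sym_all s hs, h2]
  rw [Submodule.mem_bot, ← hc]
  simp [hc0]

/-! ### Existence of the form, via the left regular representation -/

def mi : Matrix (Fin 9) (Fin 9) ℕ :=
  !![1,0,0,0,0,0,0,0,0;
     0,0,0,0,0,0,0,0,0;
     0,0,1,0,0,0,0,0,0;
     0,0,0,0,0,0,0,0,0;
     0,0,0,0,0,0,0,0,0;
     0,0,0,0,0,1,0,0,0;
     0,0,0,0,0,0,1,0,0;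
     0,0,0,0,0,0,0,1,0;
     0,0,0,0,0,0,0,0,1]

def mj : Matrix (Fin 9) (Fin 9) ℕ :=
  !![0,0,0,0,0,0,0,0,0;
     0,1,0,0,0,0,0,0,0;
     0,0,0,0,0,0,0,0,0;
     0,0,0,1,0,0,0,0,0;
     0,0,0,0,1,0,0,0,0;
     0,0,0,0,0,0,0,0,0;
     0,0,0,0,0,0,0,0,0;
     0,0,0,0,0,0,0,0,0;
     0,0,0,0,0,0,0,0,0]

def ma : Matrix (Fin 9) (Fin 9) ℕ :=
  !![0,0,0,0,0,0,0,0,0;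
     0,0,0,0,0,0,0,0,0;
     0,1,0,0,0,0,0,0,0;
     0,0,0,0,0,0,0,0,0;
     0,0,0,0,0,0,0,0,0;
     0,0,0,0,0,0,0,0,0;
     0,0,0,0,0,0,0,0,0;
     0,0,0,0,0,0,0,0,0;
     0,0,0,1,0,0,0,0,0]

def mb : Matrix (Fin 9) (Fin 9) ℕ :=
  !![0,0,0,0,0,0,0,0,0;
     0,0,0,0,0,0,0,0,0;
     0,0,0,0,0,0,0,0,0;
     1,0,0,0,0,0,0,0,0;
     0,0,1,0,0,0,0,0,0;
     0,0,0,0,0,0,0,0,0;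
     0,0,0,0,0,0,0,0,0;
     0,0,0,0,0,0,0,0,0;
     0,0,0,0,0,0,0,0,0]

def mg : Matrix (Fin 9) (Fin 9) ℕ :=
  !![0,0,0,0,0,0,0,0,0;
     0,0,0,0,0,0,0,0,0;
     0,0,0,0,0,0,0,0,0;
     0,0,0,0,0,0,0,0,0;
     0,0,0,0,0,0,0,0,0;
     1,0,0,0,0,0,0,0,0;
     0,0,0,0,0,1,0,0,0;
     0,0,0,0,0,0,0,0,0;
     0,0,0,0,0,0,1,0,0]

def md : Matrix (Fin 9) (Fin 9) ℕ :=
  !![0,0,0,0,0,0,0,0,0;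
     0,0,0,0,0,0,0,0,0;
     0,0,0,0,0,0,0,0,0;
     0,0,0,0,0,0,0,0,0;
     0,0,0,0,0,0,0,0,0;
     0,0,0,0,0,0,0,0,0;
     0,0,0,0,0,0,0,0,0;
     1,0,0,0,0,0,0,0,0;
     0,0,0,0,0,0,0,1,0]

noncomputable def cm : Matrix (Fin 9) (Fin 9) ℕ →+* Matrix (Fin 9) (Fin 9) k :=
  (Nat.castRingHom k).mapMatrix

def gm : Fin 6 → Matrix (Fin 9) (Fin 9) ℕ
  | 0 => mi
  | 1 => mj
  | 2 => ma
  | 3 => mb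
  | 4 => mg
  | 5 => md

noncomputable def Fr : FreeAlgebra k (Fin 6) →ₐ[k] Matrix (Fin 9) (Fin 9) k :=
  FreeAlgebra.lift k fun n => cm (k := k) (gm n)

lemma hF0 : Fr (k := k) (ι k 0) = cm (k := k) mi := by simp only [Fr]; rw [FreeAlgebra.lift_ι_apply]; rfl
lemma hF1 : Fr (k := k) (ι k 1) = cm (k := k) mj := by simp only [Fr]; rw [FreeAlgebra.lift_ι_apply]; rfl
lemma hF2 : Fr (k := k) (ι k 2) = cm (k := k) ma := by simp only [Fr]; rw [FreeAlgebra.lift_ι_apply]; rfl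
lemma hF3 : Fr (k := k) (ι k 3) = cm (k := k) mb := by simp only [Fr]; rw [FreeAlgebra.lift_ι_apply]; rfl
lemma hF4 : Fr (k := k) (ι k 4) = cm (k := k) mg := by simp only [Fr]; rw [FreeAlgebra.lift_ι_apply]; rfl
lemma hF5 : Fr (k := k) (ι k 5) = cm (k := k) md := by simp only [Fr]; rw [FreeAlgebra.lift_ι_apply]; rfl

lemma hrel : ∀ ⦃x y : FreeAlgebra k (Fin 6)⦄, QuiverRel k x y → Fr (k := k) x = Fr (k := k) y := by
  intro x y h
  cases h with
  | idem_i => rw [map_mul, hF0, ← map_mul, show mi * mi = mi from by decide]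
  | idem_j => rw [map_mul, hF1, ← map_mul, show mj * mj = mj from by decide]
  | orth_ij =>
      rw [map_mul, hF0, hF1, ← map_mul, show mi * mj = 0 from by decide, map_zero, map_zero]
  | orth_ji =>
      rw [map_mul, hF1, hF0, ← map_mul, show mj * mi = 0 from by decide, map_zero, map_zero]
  | sum_idem =>
      rw [map_add, hF0, hF1, ← map_add, show mi + mj = 1 from by decide, map_one, map_one]
  | alpha_src => rw [map_mul, hF0, hF2, ← map_mul, show mi * ma = ma from by decide]
  | alpha_tgt => rw [map_mul, hF2, hF1, ← map_mul, show ma * mj = ma from by decide]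
  | beta_src => rw [map_mul, hF1, hF3, ← map_mul, show mj * mb = mb from by decide]
  | beta_tgt => rw [map_mul, hF3, hF0, ← map_mul, show mb * mi = mb from by decide]
  | gamma_src => rw [map_mul, hF0, hF4, ← map_mul, show mi * mg = mg from by decide]
  | gamma_tgt => rw [map_mul, hF4, hF0, ← map_mul, show mg * mi = mg from by decide]
  | delta_src => rw [map_mul, hF0, hF5, ← map_mul, show mi * md = md from by decide]
  | delta_tgt => rw [map_mul, hF5, hF0, ← map_mul, show md * mi = md from by decide]
  | delta_sq =>
      rw [map_mul, map_mul, hF5, hF2, hF3, ← map_mul, ← map_mul,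
        show md * md = ma * mb from by decide]
  | gamma_cube =>
      rw [map_mul, map_mul, map_mul, hF4, hF2, hF3, ← map_mul, ← map_mul, ← map_mul,
        show mg * (mg * mg) = ma * mb from by decide]
  | delta_gamma =>
      rw [map_mul, hF5, hF4, ← map_mul, show md * mg = 0 from by decide, map_zero, map_zero]
  | gamma_delta =>
      rw [map_mul, hF4, hF5, ← map_mul, show mg * md = 0 from by decide, map_zero, map_zero]
  | delta_alpha =>
      rw [map_mul, hF5, hF2, ← map_mul, show md * ma = 0 from by decide, map_zero, map_zero]
  | gamma_alpha =>
      rw [map_mul, hF4, hF2, ← map_mul, show mg * ma = 0 from by decide, map_zero, map_zero]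
  | beta_delta =>
      rw [map_mul, hF3, hF5, ← map_mul, show mb * md = 0 from by decide, map_zero, map_zero]
  | beta_gamma =>
      rw [map_mul, hF3, hF4, ← map_mul, show mb * mg = 0 from by decide, map_zero, map_zero]

noncomputable def φrep : QuiverAlg k →ₐ[k] Matrix (Fin 9) (Fin 9) k :=
  RingQuot.liftAlgHom k ⟨Fr (k := k), hrel (k := k)⟩

lemma φrep_mk (x : FreeAlgebra k (Fin 6)) :
    φrep (k := k) (RingQuot.mkAlgHom k (QuiverRel k) x) = Fr (k := k) x :=
  RingQuot.liftAlgHom_mkAlgHom_apply k _ _ _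

lemma φi : φrep (k := k) (qi k) = cm (k := k) mi := by simp only [qi]; rw [φrep_mk, hF0]
lemma φj : φrep (k := k) (qj k) = cm (k := k) mj := by simp only [qj]; rw [φrep_mk, hF1]
lemma φa : φrep (k := k) (qα k) = cm (k := k) ma := by simp only [qα]; rw [φrep_mk, hF2]
lemma φb : φrep (k := k) (qβ k) = cm (k := k) mb := by simp only [qβ]; rw [φrep_mk, hF3]
lemma φg : φrep (k := k) (qγ k) = cm (k := k) mg := by simp only [qγ]; rw [φrep_mk, hF4]
lemma φd : φrep (k := k) (qδ k) = cm (k := k) md := by simp only [qδ]; rw [φrep_mk, hF5]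

lemma cm_entry (N : Matrix (Fin 9) (Fin 9) ℕ) (i j : Fin 9) :
    cm (k := k) N i j = (N i j : k) := by
  simp [cm, RingHom.mapMatrix_apply, Matrix.map_apply]

noncomputable def s₀ : QuiverAlg k →ₗ[k] k where
  toFun x := φrep (k := k) x 8 0 + φrep (k := k) x 4 1
  map_add' a b := by simp [map_add, Matrix.add_apply]; ring
  map_smul' r a := by simp [map_smul, Matrix.smul_apply, smul_eq_mul]; ring

lemma s₀_apply (a : QuiverAlg k) : s₀ (k := k) a = φrep (k := k) a 8 0 + φrep (k := k) a 4 1 := rfl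

lemma s₀_symValues : symValues k (s₀ (k := k)) := by
  refine ⟨?_, ?_, ?_, ?_, ?_, ?_, ?_, ?_, ?_⟩
  · rw [s₀_apply, φi, cm_entry, cm_entry, show mi 8 0 = 0 from by decide,
      show mi 4 1 = 0 from by decide]; simp
  · rw [s₀_apply, φj, cm_entry, cm_entry, show mj 8 0 = 0 from by decide,
      show mj 4 1 = 0 from by decide]; simp
  · rw [s₀_apply, φa, cm_entry, cm_entry, show ma 8 0 = 0 from by decide,
      show ma 4 1 = 0 from by decide]; simp
  · rw [s₀_apply, φb, cm_entry, cm_entry, show mb 8 0 = 0 from by decide,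
      show mb 4 1 = 0 from by decide]; simp
  · rw [s₀_apply, map_mul, φb, φa, ← map_mul, cm_entry, cm_entry,
      show (mb * ma) 8 0 = 0 from by decide, show (mb * ma) 4 1 = 1 from by decide]; simp
  · rw [s₀_apply, φg, cm_entry, cm_entry, show mg 8 0 = 0 from by decide,
      show mg 4 1 = 0 from by decide]; simp
  · rw [s₀_apply, pow_two, map_mul, φg, ← map_mul, cm_entry, cm_entry,
      show (mg * mg) 8 0 = 0 from by decide, show (mg * mg) 4 1 = 0 from by decide]; simp
  · rw [s₀_apply, φd, cm_entry, cm_entry, show md 8 0 = 0 from by decide,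
      show md 4 1 = 0 from by decide]; simp
  · rw [s₀_apply, pow_two, map_mul, φd, ← map_mul, cm_entry, cm_entry,
      show (md * md) 8 0 = 1 from by decide, show (md * md) 4 1 = 0 from by decide]; simp

end Aux

/-- The linear form `s` on `A` defined on the basis `{i, j, α, β, βα, γ, γ², δ, δ²}` by
`s(βα) = s(δ²) = 1` and `s = 0` on all other basis elements exists, and any such form is
a symmetrising form: `s(ab) = s(ba)` for all `a, b`, and the kernel of `s` contains no
nonzero left ideal of `A`. -/
theorem stmt_8 :
    (∃ s : QuiverAlg k →ₗ[k] k, symValues k s) ∧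
    ∀ s : QuiverAlg k →ₗ[k] k, symValues k s →
      (∀ a b : QuiverAlg k, s (a * b) = s (b * a)) ∧
      (∀ I : Ideal (QuiverAlg k), (∀ x ∈ I, s x = 0) → I = ⊥) := by
  refine ⟨⟨s₀ (k := k), s₀_symValues (k := k)⟩,
    fun s hs => ⟨sym_all s hs, ideal_part s hs⟩⟩
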